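/- For every κ ≥ 1 and n ≥ 2 there exists a nonsingular U ∈ R^{n×n} with condition number κ and 2e^{-n/2}Φ(U) = κ + 1/κ ≤ 2κ; namely one may take U diagonal with σ₁ = (2κ²/(1+κ²))^{1/2}, σ_n = (2/(1+κ²))^{1/2}, and σᵢ = 1 for 1 < i < n. -/

import Mathlib

open Matrix

/-- Theorem 2 (tightness): for every `κ ≥ 1` and `n ≥ 2` there is a nonsingular
diagonal `U ∈ ℝ^{n×n}` with singular values `σ₁ ≥ … ≥ σ_n > 0`, condition number
`σ₁/σ_n = κ`, and `2e^{-n/2}Φ(U) = κ + 1/κ ≤ 2κ`; one may take the diagonal entries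
`σ₁ = (2κ²/(1+κ²))^{1/2}`, `σ_n = (2/(1+κ²))^{1/2}`, and `σᵢ = 1` otherwise. -/
theorem Phi_bound_tight {n : ℕ} (hn : 2 ≤ n) (κ : ℝ) (hκ : 1 ≤ κ) :
    ∃ (σ : Fin n → ℝ) (U : Matrix (Fin n) (Fin n) ℝ),
      (∀ i, 0 < σ i) ∧
      (∀ i j : Fin n, i ≤ j → σ j ≤ σ i) ∧
      U = Matrix.diagonal σ ∧
      IsUnit U.det ∧
      (σ = fun i : Fin n =>
        if i.val = 0 then Real.sqrt (2 * κ ^ 2 / (1 + κ ^ 2))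
        else if i.val = n - 1 then Real.sqrt (2 / (1 + κ ^ 2))
        else 1) ∧
      σ ⟨0, by omega⟩ / σ ⟨n - 1, by omega⟩ = κ ∧
      2 * Real.exp (-(n : ℝ) / 2) *
          (Real.exp ((∑ i, ∑ j, (U i j) ^ 2) / 2) / Real.sqrt ((Uᵀ * U).det)) =
        κ + 1 / κ ∧
      κ + 1 / κ ≤ 2 * κ := by
  have hκ0 : (0:ℝ) < κ := lt_of_lt_of_le one_pos hκ
  have hden : (0:ℝ) < 1 + κ ^ 2 := by positivity
  set A : ℝ := 2 * κ ^ 2 / (1 + κ ^ 2) with hA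
  set B : ℝ := 2 / (1 + κ ^ 2) with hB
  have hA0 : 0 < A := by positivity
  have hB0 : 0 < B := by positivity
  have ha0 : 0 < Real.sqrt A := Real.sqrt_pos.mpr hA0
  have hb0 : 0 < Real.sqrt B := Real.sqrt_pos.mpr hB0
  have hAsq : Real.sqrt A ^ 2 = A := Real.sq_sqrt hA0.le
  have hBsq : Real.sqrt B ^ 2 = B := Real.sq_sqrt hB0.le
  have hAB : A + B = 2 := by rw [hA, hB, ← add_div, div_eq_iff hden.ne']; ring
  have hb1 : Real.sqrt B ≤ 1 := by
    rw [show (1:ℝ) = Real.sqrt 1 by simp]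
    apply Real.sqrt_le_sqrt
    rw [hB, div_le_one hden]; nlinarith
  have ha1 : 1 ≤ Real.sqrt A := by
    rw [show (1:ℝ) = Real.sqrt 1 by simp]
    apply Real.sqrt_le_sqrt
    rw [hA, le_div_iff₀ hden]; nlinarith
  have hab : Real.sqrt A = κ * Real.sqrt B := by
    rw [hA, hB, show 2 * κ ^ 2 / (1 + κ ^ 2) = κ ^ 2 * (2 / (1 + κ ^ 2)) by ring,
      Real.sqrt_mul (by positivity), Real.sqrt_sq hκ0.le]
  set σ : Fin n → ℝ := fun i : Fin n =>
    if i.val = 0 then Real.sqrt A else if i.val = n - 1 then Real.sqrt B else 1 with hσ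
  have hσpos : ∀ i, 0 < σ i := by
    intro i; rw [hσ]; dsimp only
    split_ifs <;> [exact ha0; exact hb0; exact one_pos]
  refine ⟨σ, Matrix.diagonal σ, hσpos, ?_, rfl, ?_, rfl, ?_, ?_, ?_⟩
  · -- monotone
    intro i j hij
    rw [hσ]; dsimp only
    have hij' : i.val ≤ j.val := hij
    have hjlt := j.isLt
    split_ifs <;> first | linarith [ha1, hb1, hb0.le] | omega
  · -- det unit
    rw [Matrix.det_diagonal]
    exact isUnit_iff_ne_zero.mpr (ne_of_gt (Finset.prod_pos fun i _ => hσpos i))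
  · -- ratio
    have h0 : ((⟨0, by omega⟩ : Fin n) : ℕ) = 0 := rfl
    have hne : ¬ ((⟨n-1, by omega⟩ : Fin n) : ℕ) = 0 := by simp; omega
    rw [hσ]; dsimp only
    rw [if_pos h0, if_neg hne, if_pos rfl, hab, mul_div_assoc, div_self hb0.ne', mul_one]
  · -- main equality
    have hne01 : (⟨0, by omega⟩ : Fin n) ≠ (⟨n-1, by omega⟩ : Fin n) := by
      simp [Fin.ext_iff]; omega
    have hsum : ∑ i, ∑ j, (Matrix.diagonal σ i j) ^ 2 = (n : ℝ) := by
      have : ∀ i : Fin n, ∑ j, (Matrix.diagonal σ i j) ^ 2 = σ i ^ 2 := by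
        intro i
        rw [Finset.sum_eq_single i]
        · simp [Matrix.diagonal]
        · intro j _ hj; simp [Matrix.diagonal_apply_ne' σ hj]
        · simp
      rw [Finset.sum_congr rfl fun i _ => this i]
      have : ∑ i, σ i ^ 2 = ∑ i : Fin n, ((σ i ^ 2 - 1) + 1) := by
        apply Finset.sum_congr rfl; intro i _; ring
      rw [this, Finset.sum_add_distrib, Finset.sum_const, Finset.card_univ,
        Fintype.card_fin, nsmul_eq_mul, mul_one]
      have h2 : ∑ i : Fin n, (σ i ^ 2 - 1) = (σ ⟨0, by omega⟩ ^ 2 - 1) + (σ ⟨n-1, by omega⟩ ^ 2 - 1) := by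
        apply Fintype.sum_eq_add _ _ hne01
        intro x hx
        rw [hσ]; dsimp only
        rw [if_neg, if_neg]
        · ring
        · intro h; exact hx.2 (by simp [Fin.ext_iff, h])
        · intro h; exact hx.1 (by simp [Fin.ext_iff, h])
      rw [h2, hσ]; dsimp only
      rw [if_pos rfl, if_neg (show ¬(n - 1 = 0) by omega), if_pos rfl, hAsq, hBsq]
      linarith [hAB]
    have hprod : Real.sqrt (((Matrix.diagonal σ)ᵀ * Matrix.diagonal σ).det)
        = Real.sqrt A * Real.sqrt B := by
      rw [Matrix.diagonal_transpose, Matrix.diagonal_mul_diagonal, Matrix.det_diagonal]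
      have : ∏ i, (σ i * σ i) = (Real.sqrt A * Real.sqrt B) ^ 2 := by
        have h2 : ∏ i, (σ i * σ i) = (σ ⟨0, by omega⟩ * σ ⟨0, by omega⟩) *
            (σ ⟨n-1, by omega⟩ * σ ⟨n-1, by omega⟩) := by
          apply Fintype.prod_eq_mul _ _ hne01
          intro x hx
          rw [hσ]; dsimp only
          rw [if_neg, if_neg]
          · ring
          · intro h; exact hx.2 (by simp [Fin.ext_iff, h])
          · intro h; exact hx.1 (by simp [Fin.ext_iff, h])
        rw [h2, hσ]; dsimp only
        rw [if_pos rfl, if_neg (show ¬(n - 1 = 0) by omega), if_pos rfl]; ring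
      rw [this, Real.sqrt_sq (by positivity)]
    rw [hsum, hprod]
    have hab2 : Real.sqrt A * Real.sqrt B = 2 * κ / (1 + κ ^ 2) := by
      have hBB : Real.sqrt B * Real.sqrt B = B := Real.mul_self_sqrt hB0.le
      rw [hab, mul_assoc, hBB, hB]; ring
    rw [hab2, show -(n:ℝ)/2 = -((n:ℝ)/2) by ring, Real.exp_neg]
    have he := Real.exp_ne_zero ((n:ℝ)/2)
    field_simp
    ring
  · -- inequality
    have : 1 / κ ≤ κ := by
      rw [div_le_iff₀ hκ0]; nlinarith
    linarith
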